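/- arXiv:1702.07177 — 2 statements merged into one kernel-verified Lean document; each statement's English description precedes it below -/
import Mathlib

section
/- For every integer k ≥ 1, the generating polynomials for Schur-coloured partitions satisfy G_{k_a}(q;a,b) = G_{k_{ab}}(q;a,b) + a q^k G_{(k−1)_a}(q;a,b). -/
/-- The three colours of Alladi and Gordon's weighted-words Schur theorem. -/
inductive SchurColor : Type
  | ab | a | b
  deriving DecidableEq

open SchurColor

/-- The order on colours: ab < a < b, encoded by an index. -/
def schurColorIdx : SchurColor → ℕ
  | ab => 0 | a => 1 | b => 2

/-- A Schur-coloured partition: a finite sequence of coloured positive integers with no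
part 1_{ab}, where consecutive parts differ by at least 2 if the colour of the larger one
is ab or is strictly smaller than the colour of the next one, and by at least 1
otherwise. -/
def IsSchurColoured (l : List (ℕ × SchurColor)) : Prop :=
  (∀ p ∈ l, 0 < p.1 ∧ ¬(p.1 = 1 ∧ p.2 = ab)) ∧
    l.Chain' (fun p q =>
      q.1 + (if p.2 = ab ∨ schurColorIdx p.2 < schurColorIdx q.2 then 2 else 1) ≤ p.1)

/-- The rank of the coloured integer k_x in the total order
1_{ab} < 1_a < 1_b < 2_{ab} < 2_a < 2_b < ⋯. -/
def schurRank (k : ℤ) (x : SchurColor) : ℤ := 3 * k + schurColorIdx x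

/-- The generating polynomial G_{k_x}(q;a,b) for Schur-coloured partitions with largest
part at most k_x, as a (polynomial) multivariate power series in the variables
q (index 0), a (index 1), b (index 2): the coefficient of a^u b^v q^n is the number of
Schur-coloured partitions of n with statistics u, v and largest part at most k_x.
By convention it equals 0 for k < 0 (and it equals 1 for k = 0 since no coloured positive
integer is ≤ 0_x). -/
noncomputable def schurG (k : ℤ) (x : SchurColor) : MvPowerSeries (Fin 3) ℤ :=
  fun m => if k < 0 then 0 else
    (Nat.card {l : List (ℕ × SchurColor) // IsSchurColoured l ∧
      (∀ p ∈ l, schurRank p.1 p.2 ≤ schurRank k x) ∧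
      (l.map Prod.fst).sum = m 0 ∧
      l.countP (fun p => decide (p.2 = a ∨ p.2 = ab)) = m 1 ∧
      l.countP (fun p => decide (p.2 = b ∨ p.2 = ab)) = m 2} : ℤ)

-- AUX START
instance : Fintype SchurColor :=
  ⟨⟨{ab, a, b}, by decide⟩, fun x => by cases x <;> decide⟩

def schurSet (k : ℤ) (x : SchurColor) (m : Fin 3 →₀ ℕ) : Set (List (ℕ × SchurColor)) :=
  {l | IsSchurColoured l ∧
      (∀ p ∈ l, schurRank p.1 p.2 ≤ schurRank k x) ∧
      (l.map Prod.fst).sum = m 0 ∧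
      l.countP (fun p => decide (p.2 = a ∨ p.2 = ab)) = m 1 ∧
      l.countP (fun p => decide (p.2 = b ∨ p.2 = ab)) = m 2}

lemma schur_card_eq (k : ℤ) (x : SchurColor) (m : Fin 3 →₀ ℕ) :
    (Nat.card {l : List (ℕ × SchurColor) // IsSchurColoured l ∧
      (∀ p ∈ l, schurRank p.1 p.2 ≤ schurRank k x) ∧
      (l.map Prod.fst).sum = m 0 ∧
      l.countP (fun p => decide (p.2 = a ∨ p.2 = ab)) = m 1 ∧
      l.countP (fun p => decide (p.2 = b ∨ p.2 = ab)) = m 2}) = (schurSet k x m).ncard :=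
  Nat.card_coe_set_eq (schurSet k x m)

lemma schur_finite (n : ℕ) :
    {l : List (ℕ × SchurColor) | (∀ p ∈ l, 0 < p.1) ∧ (l.map Prod.fst).sum = n}.Finite := by
  classical
  set f : ℕ × SchurColor → Fin (n + 1) × SchurColor :=
    fun p => (⟨min p.1 n, Nat.lt_succ_of_le (Nat.min_le_right _ _)⟩, p.2) with hf
  set g : Fin (n + 1) × SchurColor → ℕ × SchurColor := fun q => (q.1.1, q.2) with hg
  have key : ∀ l ∈ {l : List (ℕ × SchurColor) | (∀ p ∈ l, 0 < p.1) ∧ (l.map Prod.fst).sum = n},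
      (l.map f).map g = l := by
    rintro l ⟨hpos, hsum⟩
    rw [List.map_map]
    conv_rhs => rw [← List.map_id l]
    refine List.map_congr_left (fun p hp => ?_)
    have hle : p.1 ≤ n := by
      rw [← hsum]
      exact List.le_sum_of_mem (List.mem_map_of_mem (f := Prod.fst) hp)
    simp [hf, hg, Nat.min_eq_left hle]
  apply Set.Finite.of_finite_image (f := List.map f)
  · apply (List.finite_length_le (Fin (n + 1) × SchurColor) n).subset
    rintro _ ⟨l, ⟨hpos, hsum⟩, rfl⟩
    simp only [Set.mem_setOf_eq, List.length_map]
    calc l.length = (l.map Prod.fst).length := (List.length_map _).symm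
      _ ≤ (l.map Prod.fst).sum := List.length_le_sum_of_one_le _ (by
          intro i hi
          rcases List.mem_map.1 hi with ⟨p, hp, rfl⟩
          exact hpos p hp)
      _ = n := hsum
  · intro l1 h1 l2 h2 heq
    rw [← key l1 h1, ← key l2 h2, heq]

lemma schurSet_finite (k : ℤ) (x : SchurColor) (m : Fin 3 →₀ ℕ) :
    (schurSet k x m).Finite :=
  (schur_finite (m 0)).subset fun l hl => ⟨fun p hp => (hl.1.1 p hp).1, hl.2.2.1⟩

lemma schur_chain_lt (h : ℕ × SchurColor) (t : List (ℕ × SchurColor))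
    (hc : (h :: t).Chain' (fun p q =>
      q.1 + (if p.2 = ab ∨ schurColorIdx p.2 < schurColorIdx q.2 then 2 else 1) ≤ p.1)) :
    ∀ p ∈ t, p.1 < h.1 := by
  induction t generalizing h with
  | nil => simp
  | cons q t' ih =>
    rw [List.Chain', List.isChain_cons_cons] at hc
    intro p hp
    have hq : q.1 < h.1 := by have := hc.1; split_ifs at this <;> omega
    rcases List.mem_cons.1 hp with rfl | hp'
    · exact hq
    · exact (ih q hc.2 p hp').trans hq

lemma schur_key (k : ℕ) (hk : 1 ≤ k) (m : Fin 3 →₀ ℕ) :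
    (schurSet (k : ℤ) a m).ncard = (schurSet (k : ℤ) ab m).ncard +
      if (Finsupp.single (1 : Fin 3) 1 + Finsupp.single (0 : Fin 3) k) ≤ m then
        (schurSet ((k : ℤ) - 1) a
          (m - (Finsupp.single (1 : Fin 3) 1 + Finsupp.single (0 : Fin 3) k))).ncard
      else 0 := by
  classical
  set d : Fin 3 →₀ ℕ := Finsupp.single (1 : Fin 3) 1 + Finsupp.single (0 : Fin 3) k with hd
  have hd0 : d 0 = k := by simp [hd, Finsupp.single_apply]
  have hd1 : d 1 = 1 := by simp [hd, Finsupp.single_apply]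
  have hd2 : d 2 = 0 := by simp [hd, Finsupp.single_apply]
  by_cases hdm : d ≤ m
  · rw [if_pos hdm]
    have hm0 : k ≤ m 0 := hd0 ▸ Finsupp.le_def.1 hdm 0
    have hm1 : 1 ≤ m 1 := hd1 ▸ Finsupp.le_def.1 hdm 1
    have hmd0 : (m - d) 0 = m 0 - k := by rw [Finsupp.tsub_apply, hd0]
    have hmd1 : (m - d) 1 = m 1 - 1 := by rw [Finsupp.tsub_apply, hd1]
    have hmd2 : (m - d) 2 = m 2 := by rw [Finsupp.tsub_apply, hd2, Nat.sub_zero]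
    have hsub : schurSet (k : ℤ) a m =
        schurSet (k : ℤ) ab m ∪ (List.cons (k, a)) '' schurSet ((k : ℤ) - 1) a (m - d) := by
      ext l
      constructor
      · rintro ⟨⟨hparts, hchain⟩, hrank, hsum, hca, hcb⟩
        by_cases hall : ∀ p ∈ l, schurRank p.1 p.2 ≤ schurRank (k : ℤ) ab
        · exact Or.inl ⟨⟨hparts, hchain⟩, hall, hsum, hca, hcb⟩
        · right
          push_neg at hall
          obtain ⟨p, hpl, hpr⟩ := hall
          have hp2 : p = (k, a) := by
            have h1 := hrank p hpl
            obtain ⟨pk, px⟩ := p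
            cases px <;> simp [schurRank, schurColorIdx] at h1 hpr ⊢ <;> omega
          subst hp2
          rcases l with _ | ⟨h0, t⟩
          · simp at hpl
          · have hh0 : h0 = (k, a) := by
              rcases List.mem_cons.1 hpl with h | h
              · exact h.symm
              · exfalso
                have hlt := schur_chain_lt h0 t hchain _ h
                have h1 := hrank h0 (List.mem_cons_self)
                obtain ⟨hk0, hx0⟩ := h0
                cases hx0 <;> simp [schurRank, schurColorIdx] at h1 hlt <;> omega
            subst hh0
            refine ⟨t, ⟨⟨fun p hp => hparts p (List.mem_cons_of_mem _ hp), hchain.tail⟩,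
              ?_, ?_, ?_, ?_⟩, rfl⟩
            · intro q hq
              rcases t with _ | ⟨h2, t2⟩
              · simp at hq
              · rw [List.Chain', List.isChain_cons_cons] at hchain
                have hrel := hchain.1
                have hh2 : h2.1 < k := by
                  obtain ⟨n2, x2⟩ := h2
                  cases x2 <;> simp [schurColorIdx] at hrel <;> omega
                rcases List.mem_cons.1 hq with rfl | hq2
                · obtain ⟨n2, x2⟩ := q
                  cases x2 <;> simp [schurRank, schurColorIdx] at hrel ⊢ <;> omega
                · have hlt := schur_chain_lt h2 t2 hchain.2 q hq2
                  obtain ⟨nq, xq⟩ := q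
                  cases xq <;> simp [schurRank, schurColorIdx] at hlt ⊢ <;> omega
            · simp only [List.map_cons, List.sum_cons] at hsum
              rw [hmd0]
              omega
            · rw [List.countP_cons_of_pos (by simp)] at hca
              rw [hmd1]
              omega
            · rw [List.countP_cons_of_neg (by simp)] at hcb
              rw [hmd2]
              exact hcb
      · rintro (⟨hS, hrank, hsum, hca, hcb⟩ | ⟨t, ⟨⟨hparts, hchain⟩, hrank, hsum, hca, hcb⟩, rfl⟩)
        · refine ⟨hS, fun p hp => le_trans (hrank p hp) ?_, hsum, hca, hcb⟩
          simp [schurRank, schurColorIdx]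
        · refine ⟨⟨?_, ?_⟩, ?_, ?_, ?_, ?_⟩
          · rintro p hp
            rcases List.mem_cons.1 hp with rfl | hp'
            · exact ⟨hk, by simp⟩
            · exact hparts p hp'
          · rw [List.Chain', List.isChain_cons]
            refine ⟨?_, hchain⟩
            intro y hy
            rcases t with _ | ⟨h2, t2⟩
            · simp at hy
            · simp only [List.head?_cons, Option.mem_def, Option.some.injEq] at hy
              subst hy
              have h1 := hrank h2 (List.mem_cons_self)
              obtain ⟨n2, x2⟩ := h2
              cases x2 <;> simp [schurRank, schurColorIdx] at h1 ⊢ <;> omega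
          · intro p hp
            rcases List.mem_cons.1 hp with rfl | hp'
            · simp [schurRank, schurColorIdx]
            · refine le_trans (hrank p hp') ?_
              simp only [schurRank, schurColorIdx]
              omega
          · simp only [List.map_cons, List.sum_cons]
            rw [hmd0] at hsum
            omega
          · rw [List.countP_cons_of_pos (by simp)]
            rw [hmd1] at hca
            omega
          · rw [List.countP_cons_of_neg (by simp)]
            rw [hmd2] at hcb
            exact hcb
    have hdisj : Disjoint (schurSet (k : ℤ) ab m)
        ((List.cons (k, a)) '' schurSet ((k : ℤ) - 1) a (m - d)) := by
      rw [Set.disjoint_left]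
      rintro l ⟨_, hrank, _⟩ ⟨t, _, rfl⟩
      have h1 := hrank (k, a) (List.mem_cons_self)
      simp only [schurRank, schurColorIdx] at h1
      omega
    rw [hsub, Set.ncard_union_eq hdisj (schurSet_finite _ _ _)
      ((schurSet_finite _ _ _).image _), Set.ncard_image_of_injective _ List.cons_injective]
  · rw [if_neg hdm]
    have heq : schurSet (k : ℤ) a m = schurSet (k : ℤ) ab m := by
      ext l
      constructor
      · rintro ⟨hS, hrank, hsum, hca, hcb⟩
        refine ⟨hS, fun p hp => ?_, hsum, hca, hcb⟩
        by_contra hgt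
        push_neg at hgt
        have h1 := hrank p hp
        have hp2 : p = (k, a) := by
          obtain ⟨pk, px⟩ := p
          cases px <;> simp [schurRank, schurColorIdx] at h1 hgt ⊢ <;> omega
        apply hdm
        rw [Finsupp.le_def]
        intro i
        fin_cases i
        · show d 0 ≤ m 0
          rw [hd0]
          calc (k : ℕ) = ((k, a) : ℕ × SchurColor).1 := rfl
            _ ≤ (l.map Prod.fst).sum := List.le_sum_of_mem (List.mem_map_of_mem (f := Prod.fst) (hp2 ▸ hp))
            _ = m 0 := hsum
        · show d 1 ≤ m 1
          rw [hd1, ← hca]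
          exact List.countP_pos_iff.2 ⟨(k, a), hp2 ▸ hp, by simp⟩
        · show d 2 ≤ m 2
          rw [hd2]; exact Nat.zero_le _
      · rintro ⟨hS, hrank, hsum, hca, hcb⟩
        refine ⟨hS, fun p hp => le_trans (hrank p hp) ?_, hsum, hca, hcb⟩
        simp [schurRank, schurColorIdx]
    rw [heq, add_zero]

open MvPowerSeries in
/-- G_{k_a}(q;a,b) = G_{k_{ab}}(q;a,b) + a q^k G_{(k−1)_a}(q;a,b) for k ≥ 1. -/
theorem schurG_rec_a (k : ℕ) (hk : 1 ≤ k) :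
    schurG k SchurColor.a =
      schurG k SchurColor.ab +
        X 1 * (X 0 : MvPowerSeries (Fin 3) ℤ) ^ k * schurG ((k : ℤ) - 1) SchurColor.a := by
  have hXX : (X 1 * (X 0 : MvPowerSeries (Fin 3) ℤ) ^ k)
      = monomial (Finsupp.single (1 : Fin 3) 1 + Finsupp.single (0 : Fin 3) k) 1 := by
    rw [X_pow_eq, X, monomial_mul_monomial, one_mul]
  ext m
  rw [map_add, hXX, coeff_monomial_mul, one_mul]
  have h0 : ¬((k : ℤ) < 0) := by omega
  have h1 : ¬((k : ℤ) - 1 < 0) := by omega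
  simp only [coeff_apply, schurG]
  rw [if_neg h0, if_neg h0, if_neg h1]
  rw [schur_card_eq (k : ℤ) SchurColor.a m, schur_card_eq (k : ℤ) SchurColor.ab m,
    schur_card_eq ((k : ℤ) - 1) SchurColor.a
      (m - (Finsupp.single (1 : Fin 3) 1 + Finsupp.single (0 : Fin 3) k))]
  have hkey := schur_key k hk m
  split_ifs with h
  · rw [if_pos h] at hkey
    exact_mod_cast hkey
  · rw [if_neg h, add_zero] at hkey
    rw [add_zero]
    exact_mod_cast hkey
end

section
/- For every integer k ≥ 1, the generating polynomials for Schur-coloured partitions satisfy G_{k_{ab}}(q;a,b) = G_{(k−1)_b}(q;a,b) + a b q^k G_{(k−2)_b}(q;a,b). -/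
instance inst_s12 : Fintype SchurColor :=
  { elems := {SchurColor.ab, SchurColor.a, SchurColor.b},
    complete := fun x => by cases x <;> decide }

open SchurColor

lemma rank_le_b {k : ℤ} (j : ℕ) (x : SchurColor) :
    schurRank j x ≤ schurRank k b ↔ (j : ℤ) ≤ k := by
  cases x <;> simp [schurRank, schurColorIdx] <;> omega

lemma rank_le_ab {k : ℤ} (j : ℕ) (x : SchurColor) :
    schurRank j x ≤ schurRank k ab ↔ ((j : ℤ) ≤ k - 1 ∨ ((j : ℤ) = k ∧ x = ab)) := by
  cases x <;> simp [schurRank, schurColorIdx] <;> omega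

lemma pairwise_of_schur {l : List (ℕ × SchurColor)} (h : IsSchurColoured l) :
    l.Pairwise (fun p q => q.1 < p.1) := by
  haveI : IsTrans (ℕ × SchurColor) (fun p q => q.1 < p.1) := ⟨fun a b c h1 h2 => h2.trans h1⟩
  refine List.isChain_iff_pairwise.mp (h.2.imp ?_)
  intro p q hpq
  split at hpq <;> omega

lemma schur_cons_iff {k : ℕ} (l : List (ℕ × SchurColor)) (hk2 : 2 ≤ k) :
    IsSchurColoured ((k, ab) :: l) ↔ IsSchurColoured l ∧ ∀ p ∈ l, p.1 + 2 ≤ k := by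
  constructor
  · intro h
    have hp := pairwise_of_schur h
    refine ⟨⟨fun p hp' => h.1 p (List.mem_cons_of_mem _ hp'), (List.isChain_cons.mp h.2).2⟩, ?_⟩
    intro p hpl
    match l, hpl, h, hp with
    | q :: t, hpl, h, hp =>
      have hq : q.1 + 2 ≤ k := by
        have := (List.isChain_cons.mp h.2).1 q rfl
        simpa using this
      rcases List.mem_cons.mp hpl with rfl | ht
      · exact hq
      · have hlt : p.1 < q.1 :=
          (List.pairwise_cons.mp (List.pairwise_cons.mp hp).2).1 p ht
        omega
  · rintro ⟨h1, h2⟩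
    refine ⟨?_, List.isChain_cons.mpr ⟨?_, h1.2⟩⟩
    · intro p hp
      rcases List.mem_cons.mp hp with rfl | hp'
      · exact ⟨by omega, by simp; omega⟩
      · exact h1.1 p hp'
    · intro y hy
      have hyl : y ∈ l := List.mem_of_mem_head? hy
      have := h2 y hyl
      simp only []
      split <;> omega

lemma length_le_sum (l : List (ℕ × SchurColor)) (h : ∀ p ∈ l, 0 < p.1) :
    l.length ≤ (l.map Prod.fst).sum := by
  induction l with
  | nil => simp
  | cons p t ih =>
    have h1 := h p List.mem_cons_self
    have h2 := ih (fun q hq => h q (List.mem_cons_of_mem _ hq))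
    simp only [List.length_cons, List.map_cons, List.sum_cons]
    omega

lemma mem_le_sum {l : List (ℕ × SchurColor)} {p : ℕ × SchurColor} (hp : p ∈ l) :
    p.1 ≤ (l.map Prod.fst).sum :=
  List.single_le_sum (fun _ _ => Nat.zero_le _) p.1 (List.mem_map_of_mem hp)

lemma finite_schur_subtype {P : List (ℕ × SchurColor) → Prop} {n : ℕ}
    (h : ∀ l, P l → (∀ p ∈ l, 0 < p.1) ∧ (l.map Prod.fst).sum = n) :
    Finite {l // P l} := by
  haveI := (List.finite_length_le (Fin (n+1) × SchurColor) n).to_subtype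
  set f : ℕ × SchurColor → Fin (n+1) × SchurColor :=
    fun p => (⟨min p.1 n, by omega⟩, p.2) with hf
  have key : ∀ l, P l → (l.map f).map (fun q => ((q.1 : ℕ), q.2)) = l := by
    intro l hl
    rw [List.map_map]
    conv_rhs => rw [← List.map_id l]
    apply List.map_congr_left
    intro p hp
    have hle : p.1 ≤ n := (h l hl).2 ▸ mem_le_sum hp
    simp [hf, Function.comp, min_eq_left hle]
  refine Finite.of_injective (fun x : {l // P l} =>
    (⟨x.1.map f, ?_⟩ : {l : List (Fin (n+1) × SchurColor) | l.length ≤ n})) ?_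
  · show (x.1.map f).length ≤ n
    rw [List.length_map]
    exact (length_le_sum x.1 (h x.1 x.2).1).trans ((h x.1 x.2).2.le)
  · intro x y hxy
    apply Subtype.ext
    have hval : x.1.map f = y.1.map f := congrArg Subtype.val hxy
    have := congrArg (List.map (fun q : Fin (n+1) × SchurColor => ((q.1 : ℕ), q.2))) hval
    rwa [key _ x.2, key _ y.2] at this

lemma head_eq {k : ℕ} {l : List (ℕ × SchurColor)} (h : IsSchurColoured l)
    (hb : ∀ p ∈ l, schurRank p.1 p.2 ≤ schurRank k ab) (hm : (k, ab) ∈ l) :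
    l = (k, ab) :: l.tail := by
  match l, h, hb, hm with
  | p :: t, h, hb, hm =>
    rcases List.mem_cons.mp hm with h1 | h1
    · rw [← h1]
      rfl
    · exfalso
      have hlt : k < p.1 := by
        have := (List.pairwise_cons.mp (pairwise_of_schur h)).1 _ h1
        simpa using this
      have h2 := (rank_le_ab p.1 p.2).mp (hb p List.mem_cons_self)
      rcases h2 with h2 | ⟨h2, _⟩ <;> omega

/-- Lists whose cons with `(k, ab)` is a Schur-coloured partition with stats `m`. -/
abbrev VSet (k : ℕ) (m : Fin 3 →₀ ℕ) : Type :=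
  {l : List (ℕ × SchurColor) // IsSchurColoured l ∧
    (∀ p ∈ l, (p.1 : ℤ) ≤ (k : ℤ) - 2) ∧
    (l.map Prod.fst).sum + k = m 0 ∧
    l.countP (fun p => decide (p.2 = a ∨ p.2 = ab)) + 1 = m 1 ∧
    l.countP (fun p => decide (p.2 = b ∨ p.2 = ab)) + 1 = m 2 ∧ 2 ≤ k}

noncomputable def schurSplitEquiv (k : ℕ) (m : Fin 3 →₀ ℕ) :
    {l : List (ℕ × SchurColor) // IsSchurColoured l ∧
      (∀ p ∈ l, schurRank p.1 p.2 ≤ schurRank (k : ℤ) ab) ∧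
      (l.map Prod.fst).sum = m 0 ∧
      l.countP (fun p => decide (p.2 = a ∨ p.2 = ab)) = m 1 ∧
      l.countP (fun p => decide (p.2 = b ∨ p.2 = ab)) = m 2} ≃
    {l : List (ℕ × SchurColor) // IsSchurColoured l ∧
      (∀ p ∈ l, schurRank p.1 p.2 ≤ schurRank ((k : ℤ) - 1) b) ∧
      (l.map Prod.fst).sum = m 0 ∧
      l.countP (fun p => decide (p.2 = a ∨ p.2 = ab)) = m 1 ∧
      l.countP (fun p => decide (p.2 = b ∨ p.2 = ab)) = m 2} ⊕ VSet k m where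
  toFun x :=
    if hh : (k, ab) ∈ x.1 then
      Sum.inr ⟨x.1.tail, by
        obtain ⟨hsch, hrank, hsum, hc1, hc2⟩ := x.2
        have hl : x.1 = (k, ab) :: x.1.tail := head_eq hsch hrank hh
        have hk2 : 2 ≤ k := by
          obtain ⟨h0, h1⟩ := hsch.1 _ hh
          by_contra hc
          exact h1 ⟨by omega, rfl⟩
        have hsch' : IsSchurColoured ((k, ab) :: x.1.tail) := by rw [← hl]; exact hsch
        have hcons := (schur_cons_iff x.1.tail hk2).mp hsch'
        refine ⟨hcons.1, fun p hp => by have := hcons.2 p hp; omega, ?_, ?_, ?_, hk2⟩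
        · rw [hl] at hsum
          simp only [List.map_cons, List.sum_cons] at hsum
          omega
        · rw [hl, List.countP_cons_of_pos (by rfl)] at hc1
          omega
        · rw [hl, List.countP_cons_of_pos (by rfl)] at hc2
          omega⟩
    else
      Sum.inl ⟨x.1, by
        obtain ⟨hsch, hrank, hsum, hc1, hc2⟩ := x.2
        refine ⟨hsch, fun p hp => ?_, hsum, hc1, hc2⟩
        rcases (rank_le_ab p.1 p.2).mp (hrank p hp) with h1 | ⟨h1, h2⟩
        · exact (rank_le_b p.1 p.2).mpr (by omega)
        · exfalso
          have hp1 : p.1 = k := by exact_mod_cast h1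
          have hpk : p = (k, ab) := by
            obtain ⟨p1, p2⟩ := p
            simp only at hp1 h2
            rw [hp1, h2]
          exact hh (hpk ▸ hp)⟩
  invFun y := y.elim
    (fun t => ⟨t.1, by
      obtain ⟨hsch, hrank, hsum, hc1, hc2⟩ := t.2
      exact ⟨hsch, fun p hp => (rank_le_ab p.1 p.2).mpr (Or.inl (by
        have := (rank_le_b p.1 p.2).mp (hrank p hp); omega)), hsum, hc1, hc2⟩⟩)
    (fun v => ⟨(k, ab) :: v.1, by
      obtain ⟨hsch, hbd, hsum, hc1, hc2, hk2⟩ := v.2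
      refine ⟨(schur_cons_iff v.1 hk2).mpr ⟨hsch, fun p hp => by have := hbd p hp; omega⟩,
        ?_, ?_, ?_, ?_⟩
      · intro p hp
        rcases List.mem_cons.mp hp with rfl | hp'
        · exact le_refl _
        · exact (rank_le_ab p.1 p.2).mpr (Or.inl (by have := hbd p hp'; omega))
      · simp only [List.map_cons, List.sum_cons]
        omega
      · rw [List.countP_cons_of_pos (by rfl)]
        omega
      · rw [List.countP_cons_of_pos (by rfl)]
        omega⟩)
  left_inv x := by
    by_cases hh : (k, ab) ∈ x.1
    · simp only [dif_pos hh]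
      exact Subtype.ext (head_eq x.2.1 x.2.2.1 hh).symm
    · simp only [dif_neg hh]
      rfl
  right_inv y := by
    rcases y with t | v
    · have hh : (k, ab) ∉ t.1 := fun hmem => by
        have := (rank_le_b k ab).mp (t.2.2.1 (k, ab) hmem)
        omega
      simp only [Sum.elim_inl]
      exact dif_neg hh
    · simp only [Sum.elim_inr]
      exact dif_pos (List.mem_cons_self (a := (k, ab)) (l := v.1))

lemma card_split (k : ℕ) (m : Fin 3 →₀ ℕ) :
    Nat.card {l : List (ℕ × SchurColor) // IsSchurColoured l ∧
      (∀ p ∈ l, schurRank p.1 p.2 ≤ schurRank (k : ℤ) ab) ∧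
      (l.map Prod.fst).sum = m 0 ∧
      l.countP (fun p => decide (p.2 = a ∨ p.2 = ab)) = m 1 ∧
      l.countP (fun p => decide (p.2 = b ∨ p.2 = ab)) = m 2} =
    Nat.card {l : List (ℕ × SchurColor) // IsSchurColoured l ∧
      (∀ p ∈ l, schurRank p.1 p.2 ≤ schurRank ((k : ℤ) - 1) b) ∧
      (l.map Prod.fst).sum = m 0 ∧
      l.countP (fun p => decide (p.2 = a ∨ p.2 = ab)) = m 1 ∧
      l.countP (fun p => decide (p.2 = b ∨ p.2 = ab)) = m 2} + Nat.card (VSet k m) := by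
  haveI : Finite {l : List (ℕ × SchurColor) // IsSchurColoured l ∧
      (∀ p ∈ l, schurRank p.1 p.2 ≤ schurRank ((k : ℤ) - 1) b) ∧
      (l.map Prod.fst).sum = m 0 ∧
      l.countP (fun p => decide (p.2 = a ∨ p.2 = ab)) = m 1 ∧
      l.countP (fun p => decide (p.2 = b ∨ p.2 = ab)) = m 2} :=
    finite_schur_subtype (n := m 0) (fun l hl => ⟨fun p hp => (hl.1.1 p hp).1, hl.2.2.1⟩)
  haveI : Finite (VSet k m) :=
    finite_schur_subtype (n := m 0 - k)
      (fun l hl => ⟨fun p hp => (hl.1.1 p hp).1, by have := hl.2.2.1; omega⟩)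
  rw [Nat.card_congr (schurSplitEquiv k m), Nat.card_sum]

lemma card_V (k : ℕ) (hk : 1 ≤ k) (m μ : Fin 3 →₀ ℕ)
    (hμ0 : μ 0 = k) (hμ1 : μ 1 = 1) (hμ2 : μ 2 = 1) :
    (if μ ≤ m then
      (if ((k : ℤ) - 2) < 0 then (0 : ℤ) else
        (Nat.card {l : List (ℕ × SchurColor) // IsSchurColoured l ∧
          (∀ p ∈ l, schurRank p.1 p.2 ≤ schurRank ((k : ℤ) - 2) b) ∧
          (l.map Prod.fst).sum = (m - μ) 0 ∧
          l.countP (fun p => decide (p.2 = a ∨ p.2 = ab)) = (m - μ) 1 ∧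
          l.countP (fun p => decide (p.2 = b ∨ p.2 = ab)) = (m - μ) 2} : ℤ))
      else 0) = (Nat.card (VSet k m) : ℤ) := by
  by_cases hμ : μ ≤ m
  · have h0 : k ≤ m 0 := by have := Finsupp.le_def.mp hμ 0; omega
    have h1 : 1 ≤ m 1 := by have := Finsupp.le_def.mp hμ 1; omega
    have h2 : 1 ≤ m 2 := by have := Finsupp.le_def.mp hμ 2; omega
    rw [if_pos hμ]
    by_cases hk2 : 2 ≤ k
    · rw [if_neg (by omega)]
      refine congrArg Nat.cast (Nat.card_congr (Equiv.subtypeEquivRight fun l => ?_))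
      constructor
      · rintro ⟨hsch, hrank, hsum, hc1, hc2⟩
        refine ⟨hsch, fun p hp => (rank_le_b p.1 p.2).mp (hrank p hp), ?_, ?_, ?_, hk2⟩
        · rw [Finsupp.tsub_apply] at hsum; omega
        · rw [Finsupp.tsub_apply] at hc1; omega
        · rw [Finsupp.tsub_apply] at hc2; omega
      · rintro ⟨hsch, hbd, hsum, hc1, hc2, -⟩
        refine ⟨hsch, fun p hp => (rank_le_b p.1 p.2).mpr (hbd p hp), ?_, ?_, ?_⟩
        · rw [Finsupp.tsub_apply]; omega
        · rw [Finsupp.tsub_apply]; omega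
        · rw [Finsupp.tsub_apply]; omega
    · rw [if_pos (by omega)]
      haveI : IsEmpty (VSet k m) := ⟨fun v => by have := v.2.2.2.2.2.2; omega⟩
      simp [Nat.card_of_isEmpty]
  · rw [if_neg hμ]
    haveI : IsEmpty (VSet k m) := ⟨fun v => by
      obtain ⟨hsch, hbd, hsum, hc1, hc2, hk2⟩ := v.2
      apply hμ
      rw [Finsupp.le_def]
      intro i
      fin_cases i
      · show μ 0 ≤ m 0
        omega
      · show μ 1 ≤ m 1
        omega
      · show μ 2 ≤ m 2
        omega⟩
    simp [Nat.card_of_isEmpty]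

open MvPowerSeries in
/-- G_{k_{ab}}(q;a,b) = G_{(k−1)_b}(q;a,b) + a b q^k G_{(k−2)_b}(q;a,b) for k ≥ 1. -/
theorem schurG_rec_ab (k : ℕ) (hk : 1 ≤ k) :
    schurG k SchurColor.ab =
      schurG ((k : ℤ) - 1) SchurColor.b +
        X 1 * X 2 * (X 0 : MvPowerSeries (Fin 3) ℤ) ^ k * schurG ((k : ℤ) - 2) SchurColor.b := by
  set μ : Fin 3 →₀ ℕ := Finsupp.single 1 1 + Finsupp.single 2 1 + Finsupp.single 0 k with hμdef
  have hmono : (X 1 * X 2 * (X 0 : MvPowerSeries (Fin 3) ℤ) ^ k) = monomial μ 1 := by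
    rw [X_def, X_def, X_pow_eq, monomial_mul_monomial, monomial_mul_monomial, hμdef]
    norm_num
  have hμ0 : μ 0 = k := by simp [hμdef, Finsupp.single_apply]
  have hμ1 : μ 1 = 1 := by simp [hμdef, Finsupp.single_apply]
  have hμ2 : μ 2 = 1 := by simp [hμdef, Finsupp.single_apply]
  apply MvPowerSeries.ext
  intro m
  rw [hmono, map_add, coeff_monomial_mul, one_mul]
  simp only [MvPowerSeries.coeff_apply]
  simp only [schurG]
  rw [if_neg (show ¬((k : ℤ) < 0) by omega), if_neg (show ¬((k : ℤ) - 1 < 0) by omega)]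
  rw [card_split k m, card_V k hk m μ hμ0 hμ1 hμ2]
  push_cast
  ring
end
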